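/- One-sample pairwise exchangeability of SENS samples (Theorem 1). Under the one-sample model X_{ij} = μ_i + ε_{ij} (i ∈ [m], j ∈ [n_i], n_i ≥ 4) with null set H₀ = {i : μ_i = 0}, suppose that for every i ∈ H₀ the conditional distribution of the error vector (ε_{i1},…,ε_{i n_i}) given the observations of all other units (X_k)_{k≠i} is almost surely an n_i-fold product of a single probability measure on ℝ that admits a density symmetric about zero. For each i partition [n_i] into disjoint sets N_{i1}, N_{i2} of sizes n_{i1} = ⌈n_i/2⌉ and n_{i2} = n_i − n_{i1}; let X̄_{ik} and S²_{ik} be the sample mean and sample variance of {X_{ij} : j ∈ N_{ik}} (k = 1,2); set V_i = X̄_{i1} + X̄_{i2}, V_i⁰ = X̄_{i1} − X̄_{i2}, S_i = √( (n_i/(n_{i1} n_{i2})) · ((n_{i1}−1)S²_{i1} + (n_{i2}−1)S²_{i2})/(n_i−2) ), and T_i = h_i(V_i/S_i), T_i⁰ = h_i(V_i⁰/S_i), where h_i : ℝ → ℝ is an arbitrary fixed Borel measurable function (in the paper h_i = Φ⁻¹ ∘ G_{t,n_i−2}). Then for every i ∈ H₀ the random vectors T = (T_1,…,T_m) and T⁰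 = (T_1⁰,…,T_m⁰) are pairwise exchangeable at index i, i.e., the joint law of (T, T⁰) on ℝ^m × ℝ^m is invariant under the map that swaps the i-th coordinates T_i and T_i⁰. -/

import Mathlib

open MeasureTheory ProbabilityTheory
open scoped Classical

/-- Sample mean of the values `x j`, `j ∈ s`. -/
noncomputable def sampleMean {ι : Type*} (s : Finset ι) (x : ι → ℝ) : ℝ :=
  (∑ j ∈ s, x j) / s.card

/-- Sample variance of the values `x j`, `j ∈ s`. -/
noncomputable def sampleVar {ι : Type*} (s : Finset ι) (x : ι → ℝ) : ℝ :=
  (∑ j ∈ s, (x j - sampleMean s x) ^ 2) / (s.card - 1)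

/-- Swap the coordinates indexed by `J` between the two vectors of a pair. -/
def swapSet {m : ℕ} (J : Finset (Fin m)) (p : (Fin m → ℝ) × (Fin m → ℝ)) :
    (Fin m → ℝ) × (Fin m → ℝ) :=
  (fun j => if j ∈ J then p.2 j else p.1 j, fun j => if j ∈ J then p.1 j else p.2 j)

lemma sampleMean_congr {ι : Type*} {s : Finset ι} {x y : ι → ℝ} (h : ∀ j ∈ s, x j = y j) :
    sampleMean s x = sampleMean s y := by
  unfold sampleMean; rw [Finset.sum_congr rfl h]

lemma sampleVar_congr {ι : Type*} {s : Finset ι} {x y : ι → ℝ} (h : ∀ j ∈ s, x j = y j) :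
    sampleVar s x = sampleVar s y := by
  unfold sampleVar
  rw [sampleMean_congr h, Finset.sum_congr rfl (fun j hj => by rw [h j hj])]

lemma sampleMean_neg {ι : Type*} (s : Finset ι) (x : ι → ℝ) :
    sampleMean s (fun j => -x j) = -sampleMean s x := by
  unfold sampleMean; rw [Finset.sum_neg_distrib, neg_div]

lemma sampleVar_neg {ι : Type*} (s : Finset ι) (x : ι → ℝ) :
    sampleVar s (fun j => -x j) = sampleVar s x := by
  unfold sampleVar; rw [sampleMean_neg]
  congr 1
  exact Finset.sum_congr rfl (fun j hj => by ring)

lemma measurable_sampleMean {ι : Type*} [Fintype ι] (s : Finset ι) :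
    Measurable (fun x : ι → ℝ => sampleMean s x) := by
  unfold sampleMean
  exact (Finset.measurable_sum s (fun j _ => measurable_pi_apply j)).div_const _

lemma measurable_sampleVar {ι : Type*} [Fintype ι] (s : Finset ι) :
    Measurable (fun x : ι → ℝ => sampleVar s x) := by
  unfold sampleVar
  exact (Finset.measurable_sum s (fun j _ =>
    ((measurable_pi_apply j).sub (measurable_sampleMean s)).pow_const 2)).div_const _

lemma measurePreserving_neg_withDensity {f : ℝ → ENNReal} (hf : Measurable f)
    (hsym : ∀ x, f (-x) = f x) :
    MeasurePreserving (fun x : ℝ => -x) (volume.withDensity f) (volume.withDensity f) := by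
  refine ⟨measurable_neg, ?_⟩
  ext s hs
  rw [Measure.map_apply measurable_neg hs,
    withDensity_apply _ (measurable_neg hs), withDensity_apply _ hs]
  have hmp : MeasurePreserving (fun x : ℝ => -x) volume volume :=
    Measure.measurePreserving_neg volume
  calc ∫⁻ x in (fun x : ℝ => -x) ⁻¹' s, f x ∂volume
      = ∫⁻ x in (fun x : ℝ => -x) ⁻¹' s, f (-x) ∂volume :=
        setLIntegral_congr_fun (measurable_neg hs)
          (fun x _ => (hsym x).symm)
    _ = ∫⁻ x in s, f x ∂volume := hmp.setLIntegral_comp_preimage hs hf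

lemma measurePreserving_flipSigns {N : ℕ} (J : Finset (Fin N)) {ν : Measure ℝ} [SigmaFinite ν]
    (hν : MeasurePreserving (fun x : ℝ => -x) ν ν) :
    MeasurePreserving (fun (e : Fin N → ℝ) (j : Fin N) => if j ∈ J then -e j else e j)
      (Measure.pi fun _ => ν) (Measure.pi fun _ => ν) := by
  have h := measurePreserving_pi (fun _ : Fin N => ν) (fun _ => ν)
    (f := fun j x => if j ∈ J then -x else x) (fun j => by
      by_cases hj : j ∈ J
      · simpa [hj] using hν
      · simp only [hj, ↓reduceIte]; exact MeasurePreserving.id ν)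
  exact h

/-- **One-sample pairwise exchangeability of SENS samples (Theorem 1).**
Under the one-sample model `X i j = μ i + ε i j` with `n i ≥ 4` observations per unit,
if for every null unit `i` (i.e. `μ i = 0`) the conditional distribution of the error
vector of unit `i` given the observations of all other units is (a.s.) an `n i`-fold
product of a single probability measure on `ℝ` admitting a density symmetric about zero,
then the SENS test and calibration vectors `T`, `T⁰` are pairwise exchangeable at every
null index `i`: the joint law of `(T, T⁰)` is invariant under swapping `T i` and `T⁰ i`. -/
theorem sens_one_sample_pairwise_exchangeability
    {Ω : Type*} [MeasurableSpace Ω] (P : Measure Ω) [IsProbabilityMeasure P]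
    (m : ℕ) (n : Fin m → ℕ) (hn : ∀ i, 4 ≤ n i)
    (μ : Fin m → ℝ)
    (ε : (i : Fin m) → Fin (n i) → Ω → ℝ)
    (hεmeas : ∀ i j, Measurable (ε i j))
    (X : (i : Fin m) → Fin (n i) → Ω → ℝ)
    (hXdef : ∀ i j ω, X i j ω = μ i + ε i j ω)
    -- For every null unit `i`, the conditional law of the error vector of unit `i`
    -- given the observations of all other units is a.s. an i.i.d. product of a
    -- probability measure with a density symmetric about zero.
    (hcond : ∀ i : Fin m, μ i = 0 →
      ∃ (κ : Kernel ((k : {k : Fin m // k ≠ i}) → Fin (n k.1) → ℝ) (Fin (n i) → ℝ))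
        (f : ((k : {k : Fin m // k ≠ i}) → Fin (n k.1) → ℝ) → ℝ → ENNReal),
        (∀ (A : Set ((k : {k : Fin m // k ≠ i}) → Fin (n k.1) → ℝ))
            (B : Set (Fin (n i) → ℝ)), MeasurableSet A → MeasurableSet B →
          P {ω | (fun k : {k : Fin m // k ≠ i} => fun j => X k.1 j ω) ∈ A ∧
              (fun j => ε i j ω) ∈ B}
            = ∫⁻ a in A, κ a B
                ∂(Measure.map (fun ω => fun k : {k : Fin m // k ≠ i} => fun j => X k.1 j ω) P)) ∧
        (∀ᵐ a ∂(Measure.map (fun ω => fun k : {k : Fin m // k ≠ i} => fun j => X k.1 j ω) P),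
          Measurable (f a) ∧ (∫⁻ x, f a x = 1) ∧ (∀ x : ℝ, f a (-x) = f a x) ∧
          κ a = Measure.pi fun _ : Fin (n i) => (volume : Measure ℝ).withDensity (f a)))
    -- the within-unit partitions, of sizes ⌈n i / 2⌉ and n i − ⌈n i / 2⌉
    (N₁ N₂ : (i : Fin m) → Finset (Fin (n i)))
    (hdisj : ∀ i, Disjoint (N₁ i) (N₂ i))
    (hunion : ∀ i, N₁ i ∪ N₂ i = Finset.univ)
    (hcard : ∀ i, (N₁ i).card = (n i + 1) / 2)
    -- an arbitrary fixed Borel measurable transformation for each unit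
    (h : Fin m → ℝ → ℝ) (hh : ∀ i, Measurable (h i))
    (V V0 S T T0 : Fin m → Ω → ℝ)
    (hV : ∀ i ω, V i ω
      = sampleMean (N₁ i) (fun j => X i j ω) + sampleMean (N₂ i) (fun j => X i j ω))
    (hV0 : ∀ i ω, V0 i ω
      = sampleMean (N₁ i) (fun j => X i j ω) - sampleMean (N₂ i) (fun j => X i j ω))
    (hS : ∀ i ω, S i ω = Real.sqrt
      (((n i : ℝ) / (((N₁ i).card : ℝ) * ((N₂ i).card : ℝ))) *
        (((((N₁ i).card : ℝ) - 1) * sampleVar (N₁ i) (fun j => X i j ω) +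
          (((N₂ i).card : ℝ) - 1) * sampleVar (N₂ i) (fun j => X i j ω)) / ((n i : ℝ) - 2))))
    (hT : ∀ i ω, T i ω = h i (V i ω / S i ω))
    (hT0 : ∀ i ω, T0 i ω = h i (V0 i ω / S i ω))
    (i : Fin m) (hi : μ i = 0) :
    Measure.map (swapSet {i})
        (Measure.map (fun ω => (fun j => T j ω, fun j => T0 j ω)) P)
      = Measure.map (fun ω => (fun j => T j ω, fun j => T0 j ω)) P := by
  obtain ⟨κ, f, hjoint, hae⟩ := hcond i hi
  -- observations of the other units, and the error vector of unit `i`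
  set Y : Ω → ((k : {k : Fin m // k ≠ i}) → Fin (n k.1) → ℝ) :=
    fun ω => fun k : {k : Fin m // k ≠ i} => fun j => X k.1 j ω with hYdef
  set E : Ω → Fin (n i) → ℝ := fun ω => fun j => ε i j ω with hEdef
  have hXm : ∀ k j, Measurable (X k j) := by
    intro k j
    have : X k j = fun ω => μ k + ε k j ω := funext (hXdef k j)
    rw [this]; exact measurable_const.add (hεmeas k j)
  have hY : Measurable Y :=
    measurable_pi_lambda _ fun k => measurable_pi_lambda _ fun j => hXm k.1 j
  have hE : Measurable E := measurable_pi_lambda _ fun j => hεmeas i j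
  -- the sign-flip map on the error vector of unit `i`
  set R : (Fin (n i) → ℝ) → (Fin (n i) → ℝ) :=
    fun e j => if j ∈ N₂ i then -e j else e j with hRdef
  have hR : Measurable R := by
    rw [hRdef]
    apply measurable_pi_lambda
    intro j
    by_cases hj : j ∈ N₂ i
    · simp only [if_pos hj]
      exact (measurable_pi_apply j).neg
    · simp only [if_neg hj]
      exact measurable_pi_apply j
  -- Key invariance: the joint law of (Y, E) is invariant under flipping signs on N₂ i
  have key : Measure.map (fun ω => (Y ω, R (E ω))) P = Measure.map (fun ω => (Y ω, E ω)) P := by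
    have h1 : Measurable fun ω => (Y ω, R (E ω)) := hY.prodMk (hR.comp hE)
    have h2 : Measurable fun ω => (Y ω, E ω) := hY.prodMk hE
    haveI : IsProbabilityMeasure (Measure.map (fun ω => (Y ω, R (E ω))) P) :=
      Measure.isProbabilityMeasure_map h1.aemeasurable
    haveI : IsProbabilityMeasure (Measure.map (fun ω => (Y ω, E ω)) P) :=
      Measure.isProbabilityMeasure_map h2.aemeasurable
    refine ext_of_generate_finite _ generateFrom_prod.symm isPiSystem_prod ?_ (by simp)
    rintro s ⟨A, hA, B, hB, rfl⟩
    simp only [Set.mem_setOf_eq] at hA hB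
    rw [Measure.map_apply h1 (hA.prod hB), Measure.map_apply h2 (hA.prod hB)]
    have e1 : (fun ω => (Y ω, R (E ω))) ⁻¹' (A ×ˢ B)
        = {ω | Y ω ∈ A ∧ E ω ∈ R ⁻¹' B} := rfl
    have e2 : (fun ω => (Y ω, E ω)) ⁻¹' (A ×ˢ B) = {ω | Y ω ∈ A ∧ E ω ∈ B} := rfl
    rw [e1, e2, hjoint A (R ⁻¹' B) hA (hR hB), hjoint A B hA hB]
    refine lintegral_congr_ae (ae_restrict_of_ae ?_)
    filter_upwards [hae] with a ⟨hfm, hfint, hfsym, hκ⟩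
    have hprob : IsProbabilityMeasure ((volume : Measure ℝ).withDensity (f a)) := by
      constructor
      rw [withDensity_apply _ MeasurableSet.univ, Measure.restrict_univ]
      exact hfint
    have hmp := measurePreserving_flipSigns (N₂ i)
      (ν := (volume : Measure ℝ).withDensity (f a))
      (measurePreserving_neg_withDensity hfm hfsym)
    rw [hκ, ← Measure.map_apply hR hB, hmp.map_eq]
  -- The deterministic map from (other observations, unit-i errors) to (T, T⁰)
  set Sf : (k : Fin m) → (Fin (n k) → ℝ) → ℝ := fun k x => Real.sqrt
      (((n k : ℝ) / (((N₁ k).card : ℝ) * ((N₂ k).card : ℝ))) *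
        (((((N₁ k).card : ℝ) - 1) * sampleVar (N₁ k) x +
          (((N₂ k).card : ℝ) - 1) * sampleVar (N₂ k) x) / ((n k : ℝ) - 2))) with hSfdef
  set Tf : (k : Fin m) → (Fin (n k) → ℝ) → ℝ :=
    fun k x => h k ((sampleMean (N₁ k) x + sampleMean (N₂ k) x) / Sf k x) with hTfdef
  set T0f : (k : Fin m) → (Fin (n k) → ℝ) → ℝ :=
    fun k x => h k ((sampleMean (N₁ k) x - sampleMean (N₂ k) x) / Sf k x) with hT0fdef
  have hSfm : ∀ k, Measurable (Sf k) := by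
    intro k
    apply Real.continuous_sqrt.measurable.comp
    exact (measurable_const.mul (((measurable_const.mul (measurable_sampleVar (N₁ k))).add
      (measurable_const.mul (measurable_sampleVar (N₂ k)))).div_const _))
  have hTfm : ∀ k, Measurable (Tf k) := fun k => (hh k).comp
    (((measurable_sampleMean (N₁ k)).add (measurable_sampleMean (N₂ k))).div (hSfm k))
  have hT0fm : ∀ k, Measurable (T0f k) := fun k => (hh k).comp
    (((measurable_sampleMean (N₁ k)).sub (measurable_sampleMean (N₂ k))).div (hSfm k))
  set G : (((k : {k : Fin m // k ≠ i}) → Fin (n k.1) → ℝ) × (Fin (n i) → ℝ)) →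
      (Fin m → ℝ) × (Fin m → ℝ) :=
    fun p => (fun j => if hj : j = i then Tf i p.2 else Tf j (p.1 ⟨j, hj⟩),
              fun j => if hj : j = i then T0f i p.2 else T0f j (p.1 ⟨j, hj⟩)) with hGdef
  have hGm : Measurable G := by
    refine Measurable.prod ?_ ?_ <;>
      refine measurable_pi_lambda _ fun j => ?_ <;> by_cases hj : j = i
    · simpa [hGdef, hj, Function.comp_def] using (hTfm i).comp measurable_snd
    · simpa [hGdef, hj, Function.comp_def] using (hTfm j).comp ((measurable_pi_apply _).comp measurable_fst)
    · simpa [hGdef, hj, Function.comp_def] using (hT0fm i).comp measurable_snd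
    · simpa [hGdef, hj, Function.comp_def] using (hT0fm j).comp ((measurable_pi_apply _).comp measurable_fst)
  -- (T, T⁰) is G of (Y, E)
  have hΦ : (fun ω => (fun j => T j ω, fun j => T0 j ω)) = fun ω => G (Y ω, E ω) := by
    funext ω
    have hXi : (fun j => X i j ω) = E ω := by
      funext j; rw [hXdef, hi, zero_add]
    refine Prod.ext ?_ ?_ <;> funext j
    · by_cases hj : j = i
      · subst hj
        simp only [hGdef, hTfdef, hSfdef, dif_pos]
        rw [hT, hV, hS, hXi]
      · simp only [hGdef, hTfdef, hSfdef, dif_neg hj]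
        rw [hT, hV, hS]
    · by_cases hj : j = i
      · subst hj
        simp only [hGdef, hT0fdef, hSfdef, dif_pos]
        rw [hT0, hV0, hS, hXi]
      · simp only [hGdef, hT0fdef, hSfdef, dif_neg hj]
        rw [hT0, hV0, hS]
  -- G intertwines the sign flip with the coordinate swap
  have hGR : ∀ p, G (p.1, R p.2) = swapSet {i} (G p) := by
    intro p
    have hm1 : sampleMean (N₁ i) (R p.2) = sampleMean (N₁ i) p.2 :=
      sampleMean_congr fun j hj => by
        simp [hRdef, Finset.disjoint_left.mp (hdisj i) hj]
    have hm2 : sampleMean (N₂ i) (R p.2) = -sampleMean (N₂ i) p.2 := by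
      rw [show sampleMean (N₂ i) (R p.2) = sampleMean (N₂ i) (fun j => -p.2 j) from
        sampleMean_congr fun j hj => by simp [hRdef, hj], sampleMean_neg]
    have hv1 : sampleVar (N₁ i) (R p.2) = sampleVar (N₁ i) p.2 :=
      sampleVar_congr fun j hj => by
        simp [hRdef, Finset.disjoint_left.mp (hdisj i) hj]
    have hv2 : sampleVar (N₂ i) (R p.2) = sampleVar (N₂ i) p.2 := by
      rw [show sampleVar (N₂ i) (R p.2) = sampleVar (N₂ i) (fun j => -p.2 j) from
        sampleVar_congr fun j hj => by simp [hRdef, hj], sampleVar_neg]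
    have hSe : Sf i (R p.2) = Sf i p.2 := by rw [hSfdef]; simp only; rw [hv1, hv2]
    have hTe : Tf i (R p.2) = T0f i p.2 := by
      rw [hTfdef, hT0fdef]; simp only; rw [hm1, hm2, hSe, ← sub_eq_add_neg]
    have hT0e : T0f i (R p.2) = Tf i p.2 := by
      rw [hTfdef, hT0fdef]; simp only; rw [hm1, hm2, hSe, sub_neg_eq_add]
    refine Prod.ext ?_ ?_ <;> funext j
    · by_cases hj : j = i
      · subst hj
        simp only [hGdef, swapSet, Finset.mem_singleton, dif_pos, if_pos]
        exact hTe
      · simp only [hGdef, swapSet, Finset.mem_singleton, dif_neg hj, if_neg hj]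
    · by_cases hj : j = i
      · subst hj
        simp only [hGdef, swapSet, Finset.mem_singleton, dif_pos, if_pos]
        exact hT0e
      · simp only [hGdef, swapSet, Finset.mem_singleton, dif_neg hj, if_neg hj]
  have hswap : Measurable (swapSet ({i} : Finset (Fin m))) := by
    refine Measurable.prod ?_ ?_ <;> refine measurable_pi_lambda _ fun j => ?_
    · show Measurable fun p : (Fin m → ℝ) × (Fin m → ℝ) =>
        if j ∈ ({i} : Finset (Fin m)) then p.2 j else p.1 j
      by_cases hj : j ∈ ({i} : Finset (Fin m))
      · simp only [if_pos hj]
        exact (measurable_pi_apply j).comp measurable_snd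
      · simp only [if_neg hj]
        exact (measurable_pi_apply j).comp measurable_fst
    · show Measurable fun p : (Fin m → ℝ) × (Fin m → ℝ) =>
        if j ∈ ({i} : Finset (Fin m)) then p.1 j else p.2 j
      by_cases hj : j ∈ ({i} : Finset (Fin m))
      · simp only [if_pos hj]
        exact (measurable_pi_apply j).comp measurable_fst
      · simp only [if_neg hj]
        exact (measurable_pi_apply j).comp measurable_snd
  have hYE : Measurable fun ω => (Y ω, E ω) := hY.prodMk hE
  rw [hΦ]
  have step1 : Measure.map (fun ω => G (Y ω, E ω)) P
      = Measure.map G (Measure.map (fun ω => (Y ω, E ω)) P) :=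
    (Measure.map_map hGm hYE).symm
  rw [step1, Measure.map_map hswap hGm]
  have hcomp : (swapSet {i} ∘ G) = G ∘ (fun p => (p.1, R p.2)) := by
    funext p; exact (hGR p).symm
  rw [hcomp]
  have hRR : Measurable fun p : ((k : {k : Fin m // k ≠ i}) → Fin (n k.1) → ℝ) ×
      (Fin (n i) → ℝ) => (p.1, R p.2) := measurable_fst.prodMk (hR.comp measurable_snd)
  rw [← Measure.map_map hGm hRR]
  congr 1
  rw [Measure.map_map hRR hYE]
  have : ((fun p : ((k : {k : Fin m // k ≠ i}) → Fin (n k.1) → ℝ) × (Fin (n i) → ℝ) =>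
      (p.1, R p.2)) ∘ fun ω => (Y ω, E ω)) = fun ω => (Y ω, R (E ω)) := rfl
  rw [this, key]
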